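/- Any ε-randomizing random unitary channel on a d-dimensional Hilbert space with 0 < ε < 1 must use at least d unitaries, i.e., n ≥ d. -/
import Mathlib

open scoped BigOperators ComplexOrder Matrix

/-- A density operator: positive semidefinite with unit trace. -/
def IsDensity {ι : Type*} [Fintype ι] [DecidableEq ι] (ρ : Matrix ι ι ℂ) : Prop :=
  ρ.PosSemidef ∧ ρ.trace = 1

open Matrix in
lemma mrank_add_le {m : Type*} [Fintype m] [DecidableEq m] (A B : Matrix m m ℂ) :
    (A + B).rank ≤ A.rank + B.rank := by
  have h1 : (A + B).mulVecLin = A.mulVecLin + B.mulVecLin := by ext v; simp [Matrix.add_mulVec]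
  unfold Matrix.rank
  rw [h1]
  have hle : LinearMap.range (A.mulVecLin + B.mulVecLin) ≤
      LinearMap.range A.mulVecLin ⊔ LinearMap.range B.mulVecLin := by
    rintro x ⟨v, rfl⟩
    exact Submodule.add_mem_sup ⟨v, rfl⟩ ⟨v, rfl⟩
  calc Module.finrank ℂ ↥(LinearMap.range (A.mulVecLin + B.mulVecLin))
      ≤ Module.finrank ℂ ↥(LinearMap.range A.mulVecLin ⊔ LinearMap.range B.mulVecLin) :=
        Submodule.finrank_mono hle
    _ ≤ _ := by
        have := Submodule.finrank_sup_add_finrank_inf_eq (LinearMap.range A.mulVecLin)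
          (LinearMap.range B.mulVecLin)
        omega

open Matrix in
lemma mrank_sum_le {m ι : Type*} [Fintype m] [DecidableEq m] (s : Finset ι)
    (f : ι → Matrix m m ℂ) : (∑ i ∈ s, f i).rank ≤ ∑ i ∈ s, (f i).rank := by
  classical
  induction s using Finset.cons_induction with
  | empty => simp
  | cons a s ha ih =>
    rw [Finset.sum_cons, Finset.sum_cons]
    exact (mrank_add_le _ _).trans (Nat.add_le_add_left ih _)

/-- Any ε-randomizing random unitary channel on a d-dimensional
Hilbert space with 0 < ε < 1 must use at least d unitaries: n ≥ d. -/
theorem eps_randomizing_needs_d_unitaries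
    (d n : ℕ) (hd : 0 < d) (hn : 0 < n) (ε : ℝ) (hε0 : 0 < ε) (hε1 : ε < 1)
    (V : Fin n → Matrix (Fin d) (Fin d) ℂ)
    (hV : ∀ i, V i ∈ Matrix.unitaryGroup (Fin d) ℂ)
    (N : Matrix (Fin d) (Fin d) ℂ → Matrix (Fin d) (Fin d) ℂ)
    (hN : N = fun ρ => ((n : ℂ))⁻¹ • ∑ i, V i * ρ * (V i)ᴴ)
    (hrand : ∀ ρ : Matrix (Fin d) (Fin d) ℂ, IsDensity ρ →
      ∀ (h : (N ρ).IsHermitian) (i : Fin d),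
        |h.eigenvalues i - 1 / d| ≤ ε / d) :
    d ≤ n := by
  classical
  set w : Fin d → ℂ := fun i => if i = ⟨0, hd⟩ then 1 else 0 with hw
  set ρ : Matrix (Fin d) (Fin d) ℂ := Matrix.diagonal w with hρdef
  have hρdens : IsDensity ρ := by
    constructor
    · refine Matrix.posSemidef_diagonal_iff.mpr fun i => ?_
      by_cases h : i = ⟨0, hd⟩ <;> simp [hw, h]
    · simp [hρdef, Matrix.trace_diagonal, hw]
  have hρherm : ρ.IsHermitian := hρdens.1.1
  have hH : (N ρ).IsHermitian := by
    rw [hN]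
    unfold Matrix.IsHermitian
    rw [Matrix.conjTranspose_smul, Matrix.conjTranspose_sum]
    congr 1
    · simp
    · refine Finset.sum_congr rfl fun i _ => ?_
      rw [Matrix.conjTranspose_mul, Matrix.conjTranspose_mul, Matrix.conjTranspose_conjTranspose,
        hρherm.eq, Matrix.mul_assoc]
  have hd' : (0:ℝ) < d := by exact_mod_cast hd
  have heig : ∀ i, hH.eigenvalues i ≠ 0 := by
    intro i
    have h1 := hrand ρ hρdens hH i
    have h2 := abs_le.mp h1
    have hεd : ε / d < 1 / d := by gcongr
    have : 0 < hH.eigenvalues i := by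
      have := h2.1
      have h3 : 0 < 1 / (d:ℝ) := by positivity
      nlinarith [h2.1]
    exact ne_of_gt this
  have hrank : (N ρ).rank = d := by
    rw [hH.rank_eq_card_non_zero_eigs]
    calc Fintype.card {i // hH.eigenvalues i ≠ 0}
        = Fintype.card (Fin d) := Fintype.card_congr (Equiv.subtypeUnivEquiv heig)
      _ = d := Fintype.card_fin d
  have hρrank : ρ.rank = 1 := by
    rw [hρdef, Matrix.rank_diagonal]
    calc Fintype.card {i // w i ≠ 0}
        = Fintype.card {i // i = (⟨0, hd⟩ : Fin d)} :=
          Fintype.card_congr (Equiv.subtypeEquivRight (fun i => by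
            by_cases h : i = ⟨0, hd⟩ <;> simp [hw, h]))
      _ = 1 := Fintype.card_subtype_eq _
  have hrank_le : (N ρ).rank ≤ n := by
    rw [hN]
    show (((n : ℂ))⁻¹ • ∑ i, V i * ρ * (V i)ᴴ).rank ≤ n
    have hc : ((n : ℂ))⁻¹ ≠ 0 := by
      simp only [ne_eq, inv_eq_zero, Nat.cast_eq_zero]; omega
    rw [Matrix.smul_eq_diagonal_mul]
    rw [Matrix.rank_mul_eq_right_of_isUnit_det _ _ (by
      rw [Matrix.det_diagonal, Finset.prod_const]
      exact (isUnit_iff_ne_zero.mpr (pow_ne_zero _ hc)))]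
    calc (∑ i, V i * ρ * (V i)ᴴ).rank
        ≤ ∑ i : Fin n, (V i * ρ * (V i)ᴴ).rank := mrank_sum_le _ _
      _ ≤ ∑ i : Fin n, 1 := by
          refine Finset.sum_le_sum fun i _ => ?_
          calc (V i * ρ * (V i)ᴴ).rank ≤ (V i * ρ).rank := Matrix.rank_mul_le_left _ _
            _ ≤ ρ.rank := Matrix.rank_mul_le_right _ _
            _ = 1 := hρrank
      _ = n := by simp
  omega
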